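/- There exists a semigroup S with exactly 5 elements such that: S is regular; Green's H-relation on S is trivial (a H b implies a = b); S is not an inverse semigroup (some element of S has more than one inverse); and S has exactly one permutation matching. -/

import Mathlib

set_option maxRecDepth 4000


variable {S : Type*}

/-- `b` is an inverse of `a`: `a*b*a = a` and `b*a*b = b`. -/
def IsInverseOf [Semigroup S] (b a : S) : Prop := a * b * a = a ∧ b * a * b = b

/-- `invs a` is the set `V(a)` of inverses of `a`. -/
def invs [Semigroup S] (a : S) : Set S := {b | IsInverseOf b a}

/-- `invsSet A` is `V(A) = ⋃ a ∈ A, V(a)`. -/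
def invsSet [Semigroup S] (A : Set S) : Set S := ⋃ a ∈ A, invs a

/-- A semigroup is regular if every element has an inverse. -/
def IsRegularSemigroup (S : Type*) [Semigroup S] : Prop := ∀ a : S, ∃ b, IsInverseOf b a

/-- A permutation matching: a bijection sending each element to one of its inverses. -/
def IsPermMatching [Semigroup S] (f : S → S) : Prop :=
  Function.Bijective f ∧ ∀ a, f a ∈ invs a

def lSet [Semigroup S] (a : S) : Set S := insert a {x | ∃ s, s * a = x}
def rSet [Semigroup S] (a : S) : Set S := insert a {x | ∃ s, a * s = x}
/-- Green's L relation. -/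
def greenL [Semigroup S] (a b : S) : Prop := lSet a = lSet b
/-- Green's R relation. -/
def greenR [Semigroup S] (a b : S) : Prop := rSet a = rSet b
/-- Green's H relation. -/
def greenH [Semigroup S] (a b : S) : Prop := greenL a b ∧ greenR a b
/-- Green's D relation. -/
def greenD [Semigroup S] (a b : S) : Prop := ∃ c, greenL a c ∧ greenR c b
def dClass [Semigroup S] (a : S) : Set S := {b | greenD a b}
def lClass [Semigroup S] (a : S) : Set S := {b | greenL a b}
def rClass [Semigroup S] (a : S) : Set S := {b | greenR a b}

/-- `spow x n = x^(n+1)` (positive powers in a semigroup). -/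
def spow [Semigroup S] (x : S) : ℕ → S
  | 0 => x
  | n + 1 => spow x n * x

/-- `e` is an idempotent positive power of `x`; in a finite semigroup this
characterises `e = x^ω`. -/
def IsOmega [Semigroup S] (x e : S) : Prop := (∃ k : ℕ, e = spow x k) ∧ e * e = e

/-- `y = x^(ω-1)`: `y = x^m` for the least positive `m` with `x^(m+1)` idempotent
(in a finite semigroup `x^(m+1)` idempotent iff `x^(m+1) = x^ω`). Here `m = k+1`. -/
def IsOmegaMinusOne [Semigroup S] (x y : S) : Prop :=
  ∃ k : ℕ, y = spow x k ∧ spow x (k+1) * spow x (k+1) = spow x (k+1) ∧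
    ∀ j < k, ¬ (spow x (j+1) * spow x (j+1) = spow x (j+1))

/-- Theorem 2.2, example. There is a 5-element regular semigroup with
trivial H-relation which is not inverse but has exactly one permutation matching. -/

inductive M5 : Type
  | a0 | a1 | a2 | a3 | a4
  deriving DecidableEq

instance M5fintype : Fintype M5 :=
  ⟨{M5.a0, M5.a1, M5.a2, M5.a3, M5.a4}, by intro x; cases x <;> decide⟩

open M5 in
def M5mul : M5 → M5 → M5
  | a0, _ => a0
  | a1, a0 => a0 | a1, a1 => a0 | a1, a2 => a0 | a1, a3 => a1 | a1, a4 => a2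
  | a2, a0 => a0 | a2, a1 => a1 | a2, a2 => a2 | a2, a3 => a1 | a2, a4 => a2
  | a3, a0 => a0 | a3, a1 => a0 | a3, a2 => a0 | a3, a3 => a3 | a3, a4 => a4
  | a4, a0 => a0 | a4, a1 => a3 | a4, a2 => a4 | a4, a3 => a3 | a4, a4 => a4

instance M5sg : Semigroup M5 where
  mul := M5mul
  mul_assoc := by decide

open M5 in
def M5f : M5 → M5
  | a0 => a0 | a1 => a4 | a2 => a2 | a3 => a3 | a4 => a1

/-- Theorem 2.2, example. There is a 5-element regular semigroup with
trivial H-relation which is not inverse but has exactly one permutation matching. -/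
theorem stmt_13 :
    ∃ (S : Type) (inst : Semigroup S) (instF : Fintype S),
      Fintype.card S = 5 ∧
      @IsRegularSemigroup S inst ∧
      (∀ a b : S, @greenH S inst a b → a = b) ∧
      ¬ (∀ a : S, ∃! b : S, b ∈ @invs S inst a) ∧
      (∃! f : S → S, @IsPermMatching S inst f) := by
  refine ⟨M5, M5sg, inferInstance, rfl, ?_, ?_, ?_, ?_⟩
  · show ∀ a : M5, ∃ b, a * b * a = a ∧ b * a * b = b
    decide
  · have key : ∀ a b : M5,
        ((∀ x, (x = a ∨ ∃ s, s * a = x) ↔ (x = b ∨ ∃ s, s * b = x)) ∧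
         (∀ x, (x = a ∨ ∃ s, a * s = x) ↔ (x = b ∨ ∃ s, b * s = x))) → a = b := by decide
    rintro a b ⟨hl, hr⟩
    exact key a b ⟨fun x => Set.ext_iff.mp hl x, fun x => Set.ext_iff.mp hr x⟩
  · show ¬ (∀ a : M5, ∃ b : M5, (a * b * a = a ∧ b * a * b = b) ∧
        ∀ c : M5, (a * c * a = a ∧ c * a * c = c) → c = b)
    decide
  · refine ⟨M5f, ⟨?_, ?_⟩, ?_⟩
    · decide
    · show ∀ a : M5, a * M5f a * a = a ∧ M5f a * a * M5f a = M5f a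
      decide
    · intro g hg
      have hinj := hg.1.1
      have hi : ∀ a : M5, a * g a * a = a ∧ g a * a * g a = g a := hg.2
      have L0 : ∀ y : M5, (M5.a0 * y * M5.a0 = M5.a0 ∧ y * M5.a0 * y = y) → y = M5.a0 := by decide
      have L1 : ∀ y : M5, (M5.a1 * y * M5.a1 = M5.a1 ∧ y * M5.a1 * y = y) → y = M5.a4 := by decide
      have L2 : ∀ y : M5, (M5.a2 * y * M5.a2 = M5.a2 ∧ y * M5.a2 * y = y) →
          y = M5.a2 ∨ y = M5.a4 := by decide
      have L3 : ∀ y : M5, (M5.a3 * y * M5.a3 = M5.a3 ∧ y * M5.a3 * y = y) →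
          y = M5.a3 ∨ y = M5.a4 := by decide
      have L4 : ∀ y : M5, (M5.a4 * y * M5.a4 = M5.a4 ∧ y * M5.a4 * y = y) →
          y = M5.a1 ∨ y = M5.a2 ∨ y = M5.a3 ∨ y = M5.a4 := by decide
      have h0 : g M5.a0 = M5.a0 := L0 _ (hi M5.a0)
      have h1 : g M5.a1 = M5.a4 := L1 _ (hi M5.a1)
      have h2 : g M5.a2 = M5.a2 := by
        rcases L2 _ (hi M5.a2) with h | h
        · exact h
        · exact absurd (hinj (h.trans h1.symm)) (by decide)
      have h3 : g M5.a3 = M5.a3 := by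
        rcases L3 _ (hi M5.a3) with h | h
        · exact h
        · exact absurd (hinj (h.trans h1.symm)) (by decide)
      have h4 : g M5.a4 = M5.a1 := by
        rcases L4 _ (hi M5.a4) with h | h | h | h
        · exact h
        · exact absurd (hinj (h.trans h2.symm)) (by decide)
        · exact absurd (hinj (h.trans h3.symm)) (by decide)
        · exact absurd (hinj (h.trans h1.symm)) (by decide)
      funext x
      cases x <;> assumption
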